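/- Fix n ≥ 1 and ε ∈ (0,1). In the Pigou network with unit demand, latencies x^n and constant c = (n+1)(1−ε), the optimal flow routes x* = (1−ε)^{1/n} on the polynomial edge, and the average unfairness of the optimal flow equals (n+1) − n(1−ε)^{1/n}, which tends to 1 as ε → 0⁺. -/

import Mathlib

lemma amgm (n : ℕ) {x a : ℝ} (hx : 0 ≤ x) (ha : 0 ≤ a) :
    ((n:ℝ)+1) * (x * a^n) ≤ x^(n+1) + n * a^(n+1) := by
  induction n with
  | zero => simp
  | succ n ih =>
    have key : 0 ≤ (x - a) * (x^(n+1) - a^(n+1)) := by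
      rcases le_total a x with h' | h'
      · exact mul_nonneg (by linarith) (sub_nonneg.2 (pow_le_pow_left₀ ha h' (n+1)))
      · have h2 := pow_le_pow_left₀ hx h' (n+1)
        have := mul_nonneg (sub_nonneg.2 h') (sub_nonneg.2 h2)
        nlinarith [this]
    have ih' := mul_le_mul_of_nonneg_left ih ha
    have e1 : x^(n+1+1) = x * x^(n+1) := by ring
    have e2 : a^(n+1+1) = a * (a * a^n) := by ring
    have e3 : a^(n+1) = a * a^n := by ring
    push_cast
    rw [e1, e2]; rw [e3] at key ih' ⊢
    nlinarith [key, ih']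

theorem stmt_7 (n : ℕ) (hn : 1 ≤ n) :
    (∀ ε ∈ Set.Ioo (0:ℝ) 1,
      (∀ x ∈ Set.Icc (0:ℝ) 1,
        ((1 - ε) ^ ((n : ℝ)⁻¹)) ^ (n + 1) +
            (1 - (1 - ε) ^ ((n : ℝ)⁻¹)) * (((n : ℝ) + 1) * (1 - ε)) ≤
          x ^ (n + 1) + (1 - x) * (((n : ℝ) + 1) * (1 - ε))) ∧
      (((1 - ε) ^ ((n : ℝ)⁻¹)) ^ (n + 1) +
            (1 - (1 - ε) ^ ((n : ℝ)⁻¹)) * (((n : ℝ) + 1) * (1 - ε))) /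
          (((1 - ε) ^ ((n : ℝ)⁻¹)) ^ n) =
        ((n : ℝ) + 1) - (n : ℝ) * (1 - ε) ^ ((n : ℝ)⁻¹)) ∧
    Filter.Tendsto (fun ε : ℝ => ((n : ℝ) + 1) - (n : ℝ) * (1 - ε) ^ ((n : ℝ)⁻¹))
      (nhdsWithin 0 (Set.Ioi 0)) (nhds 1) := by
  have hn0 : (n:ℝ) ≠ 0 := Nat.cast_ne_zero.2 (by omega)
  constructor
  · intro ε hε
    set a : ℝ := (1 - ε) ^ ((n : ℝ)⁻¹) with ha_def
    have h1ε : (0:ℝ) < 1 - ε := by linarith [hε.2]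
    have ha0 : 0 < a := Real.rpow_pos_of_pos h1ε _
    have han : a ^ n = 1 - ε := by
      rw [ha_def, ← Real.rpow_natCast ((1-ε) ^ ((n:ℝ)⁻¹)) n, ← Real.rpow_mul h1ε.le,
        inv_mul_cancel₀ hn0, Real.rpow_one]
    have han1 : a ^ (n+1) = a ^ n * a := by ring
    constructor
    · intro x hx
      have key := amgm n hx.1 ha0.le
      rw [han1, han]
      have : ((n:ℝ)+1) * (x * (1 - ε)) ≤ x^(n+1) + n * ((1-ε) * a) := by
        rw [← han]; calc ((n:ℝ)+1) * (x * a^n) ≤ x^(n+1) + n * a^(n+1) := key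
          _ = x^(n+1) + n * (a^n * a) := by rw [han1]
      nlinarith [this]
    · rw [han1, han]
      field_simp
      ring
  · have hc : ContinuousAt (fun ε : ℝ => ((n : ℝ) + 1) - (n : ℝ) * (1 - ε) ^ ((n : ℝ)⁻¹)) 0 := by
      have h1 : ContinuousAt (fun y : ℝ => y ^ ((n : ℝ)⁻¹)) 1 :=
        Real.continuousAt_rpow_const 1 _ (Or.inl one_ne_zero)
      have h2 : ContinuousAt (fun ε : ℝ => 1 - ε) 0 := by fun_prop
      have h3 : ContinuousAt (fun ε : ℝ => (1 - ε) ^ ((n : ℝ)⁻¹)) 0 := by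
        have h1' : ContinuousAt (fun y : ℝ => y ^ ((n : ℝ)⁻¹)) ((1:ℝ) - 0) := by
          norm_num; exact h1
        exact h1'.comp h2
      fun_prop
    have := hc.continuousWithinAt (s := Set.Ioi (0:ℝ))
    have hval : ((n : ℝ) + 1) - (n : ℝ) * (1 - (0:ℝ)) ^ ((n : ℝ)⁻¹) = 1 := by
      simp [Real.one_rpow]
    rw [ContinuousWithinAt] at this
    simpa [hval] using this
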